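/- A marked Petri net (N, m) is integer unbounded if and only if there exists an integral marking m' > 0 such that 0 integer-reaches m'. In particular, integer unboundedness does not depend on the initial marking m. -/

import Mathlib

structure PetriNet (P T : Type) [Fintype P] [Fintype T] where
  pre : T → P → ℕ
  post : T → P → ℕ

variable {P T : Type} [Fintype P] [Fintype T] [DecidableEq P]

namespace PetriNet

def enabled (N : PetriNet P T) (t : T) (m : P → ℕ) : Prop := ∀ p, N.pre t p ≤ m p

def fires (N : PetriNet P T) (m m' : P → ℕ) : Prop :=
  ∃ t, N.enabled t m ∧ ∀ p, m' p = m p + N.post t p - N.pre t p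

def reach (N : PetriNet P T) : (P → ℕ) → (P → ℕ) → Prop := Relation.ReflTransGen N.fires

def zfires (N : PetriNet P T) (m m' : P → ℤ) : Prop :=
  ∃ t, ∀ p, m' p = m p + (N.post t p : ℤ) - (N.pre t p : ℤ)

def zreach (N : PetriNet P T) : (P → ℤ) → (P → ℤ) → Prop := Relation.ReflTransGen N.zfires

def cfires (N : PetriNet P T) (m m' : P → ℚ) : Prop :=
  ∃ t, ∃ l : ℚ, 0 < l ∧ l ≤ 1 ∧ (∀ p, l * (N.pre t p : ℚ) ≤ m p) ∧
    ∀ p, m' p = m p + l * ((N.post t p : ℚ) - (N.pre t p : ℚ))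

def creach (N : PetriNet P T) : (P → ℚ) → (P → ℚ) → Prop := Relation.ReflTransGen N.cfires

def bounded (N : PetriNet P T) (m : P → ℕ) : Prop :=
  ∃ b : ℕ, ∀ m', N.reach m m' → ∀ p, m' p ≤ b

def zbounded (N : PetriNet P T) (m : P → ℕ) : Prop :=
  ∃ b : ℕ, ∀ m' : P → ℤ, N.zreach (fun p => (m p : ℤ)) m' → (∀ p, 0 ≤ m' p) →
    ∀ p, m' p ≤ (b : ℤ)

def quasiLive (N : PetriNet P T) (m : P → ℕ) (t : T) : Prop :=
  ∃ m', N.reach m m' ∧ N.enabled t m'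

def live (N : PetriNet P T) (m : P → ℕ) (t : T) : Prop :=
  ∀ m', N.reach m m' → N.quasiLive m' t

def freeChoice (N : PetriNet P T) : Prop :=
  ∀ s t : T, (∀ p, N.pre s p = 0 ∨ N.pre t p = 0) ∨ N.pre s = N.pre t

def edge (N : PetriNet P T) : (P ⊕ T) → (P ⊕ T) → Prop
  | Sum.inl p, Sum.inr t => 0 < N.pre t p
  | Sum.inr t, Sum.inl p => 0 < N.post t p
  | _, _ => False

-- translation invariance
theorem zreach_add (N : PetriNet P T) {a b : P → ℤ} (c : P → ℤ) (h : N.zreach a b) :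
    N.zreach (fun p => a p + c p) (fun p => b p + c p) := by
  induction h with
  | refl => exact Relation.ReflTransGen.refl
  | tail _ hf ih =>
    obtain ⟨t, ht⟩ := hf
    exact ih.tail ⟨t, fun p => by dsimp only; rw [ht p]; ring⟩

open Classical in
theorem parikh (N : PetriNet P T) {a b : P → ℤ} (h : N.zreach a b) :
    ∃ x : T → ℕ, ∀ p, b p = a p + ∑ t, (x t : ℤ) * ((N.post t p : ℤ) - (N.pre t p : ℤ)) := by
  induction h with
  | refl => exact ⟨0, fun p => by simp⟩
  | tail _ hf ih =>
    obtain ⟨x, hx⟩ := ih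
    obtain ⟨t₀, ht₀⟩ := hf
    refine ⟨fun t => x t + if t = t₀ then 1 else 0, fun p => ?_⟩
    rw [ht₀ p, hx p]
    push_cast
    rw [Finset.sum_congr rfl (fun t _ => add_mul (x t : ℤ) _ _), Finset.sum_add_distrib]
    rw [show ∑ t, (if t = t₀ then (1:ℤ) else 0) * ((N.post t p : ℤ) - (N.pre t p : ℤ))
        = ∑ t, (if t = t₀ then ((N.post t p : ℤ) - (N.pre t p : ℤ)) else 0) by
      refine Finset.sum_congr rfl fun t _ => ?_
      split <;> simp]
    rw [Finset.sum_ite_eq' Finset.univ t₀]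
    simp; ring

open Classical in
theorem reach_of_parikh (N : PetriNet P T) (x : T → ℕ) :
    N.zreach 0 (fun p => ∑ t, (x t : ℤ) * ((N.post t p : ℤ) - (N.pre t p : ℤ))) := by
  suffices H : ∀ n (x : T → ℕ), ∑ t, x t = n →
      N.zreach 0 (fun p => ∑ t, (x t : ℤ) * ((N.post t p : ℤ) - (N.pre t p : ℤ))) from
    H _ x rfl
  intro n
  induction n using Nat.strong_induction_on with
  | _ n ih =>
  intro x hn
  rcases Nat.eq_zero_or_pos n with rfl | hpos
  · have : ∀ t, x t = 0 := by
      intro t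
      exact (Finset.sum_eq_zero_iff.mp hn) t (Finset.mem_univ t)
    have : (fun p => ∑ t, (x t : ℤ) * ((N.post t p : ℤ) - (N.pre t p : ℤ))) = (0 : P → ℤ) := by
      funext p; simp [this]
    rw [this]
    exact Relation.ReflTransGen.refl
  · obtain ⟨t₀, ht₀⟩ : ∃ t₀, 0 < x t₀ := by
      by_contra hc
      push_neg at hc
      simp only [Nat.le_zero] at hc
      simp [hc] at hn
      omega
    set x' : T → ℕ := fun t => x t - (if t = t₀ then 1 else 0) with hx'
    have hsum : ∑ t, x' t = n - 1 := by
      rw [hx']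
      rw [← hn]
      rw [Finset.sum_congr rfl (fun t _ => rfl)]
      have : ∑ t, (x t - if t = t₀ then 1 else 0) = ∑ t, x t - ∑ t, (if t = t₀ then 1 else 0) := by
        rw [Finset.sum_tsub_distrib]
        intro t _
        by_cases h : t = t₀
        · subst h; simp; omega
        · simp [h]
      rw [this, Finset.sum_ite_eq' Finset.univ t₀]
      simp
    have hr := ih (n-1) (by omega) x' hsum
    refine hr.tail ⟨t₀, fun p => ?_⟩
    have hxx : ∀ t, (x t : ℤ) = (x' t : ℤ) + if t = t₀ then 1 else 0 := by
      intro t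
      by_cases h : t = t₀
      · subst h; simp only [hx']; simp; omega
      · simp [hx', h]
    dsimp only
    rw [Finset.sum_congr rfl (fun t _ => by rw [hxx t, add_mul])]
    rw [Finset.sum_add_distrib]
    rw [show ∑ t, (if t = t₀ then (1:ℤ) else 0) * ((N.post t p : ℤ) - (N.pre t p : ℤ))
        = ∑ t, (if t = t₀ then ((N.post t p : ℤ) - (N.pre t p : ℤ)) else 0) by
      refine Finset.sum_congr rfl fun t _ => ?_
      split <;> simp]
    rw [Finset.sum_ite_eq' Finset.univ t₀]
    simp; ring


end PetriNet

/-- The marking with `k` tokens in place `p` and none elsewhere. -/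
def mk1 (p : P) (k : ℕ) : P → ℕ := fun q => if q = p then k else 0

/-- The continuous marking with `k` tokens in place `p` and none elsewhere. -/
def mkQ (p : P) (k : ℚ) : P → ℚ := fun q => if q = p then k else 0

open Classical in
theorem stmt1 (N : PetriNet P T) (m : P → ℕ) :
    ¬ N.zbounded m ↔
      ∃ m' : P → ℤ, (∀ p, 0 ≤ m' p) ∧ m' ≠ 0 ∧ N.zreach (0 : P → ℤ) m' := by
  constructor
  · intro h
    unfold PetriNet.zbounded at h
    push_neg at h
    choose F hF1 hF2 hF3 using h
    -- recursively growing sequence of bounds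
    set s : ℕ → ℕ := fun k => Nat.rec 0 (fun _ sk => sk + 1 + (∑ q, F sk q).toNat) k with hs
    have hsucc : ∀ k, s (k + 1) = s k + 1 + (∑ q, F (s k) q).toNat := fun k => rfl
    have hmono : StrictMono s := strictMono_nat_of_lt_succ (fun k => by rw [hsucc]; omega)
    have hbig : ∀ i j, i < j → (∑ q, F (s i) q) < (s j : ℤ) := by
      intro i j hij
      have h1 : s (i + 1) ≤ s j := hmono.le_iff_le.mpr hij
      have h2 : (∑ q, F (s i) q).toNat < s (i+1) := by rw [hsucc]; omega
      have h3 : ((∑ q, F (s i) q).toNat : ℤ) = ∑ q, F (s i) q :=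
        Int.toNat_of_nonneg (Finset.sum_nonneg fun q _ => hF2 (s i) q)
      omega
    -- Parikh vectors
    choose x hx using fun k => N.parikh (hF1 (s k))
    -- Dickson's lemma
    set u : ℕ → (T ⊕ P → ℕ) :=
      fun k => Sum.elim (x k) (fun p => (F (s k) p).toNat) with hu
    have hpwo : (Set.univ : Set ((_ : T ⊕ P) → ℕ)).IsPWO :=
      by simpa using Set.IsPWO.pi (fun (_ : T ⊕ P) => Set.isPWO_of_wellQuasiOrderedLE (Set.univ : Set ℕ))
    obtain ⟨i, j, hij, hle⟩ := Set.PartiallyWellOrderedOn.exists_lt hpwo (f := u) (fun _ => Set.mem_univ _)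
    have hxle : ∀ t, x i t ≤ x j t := fun t => hle (Sum.inl t)
    have hMle : ∀ p, F (s i) p ≤ F (s j) p := by
      intro p
      have := hle (Sum.inr p)
      simp only [hu, Sum.elim_inr] at this
      have h1 := hF2 (s i) p
      have h2 := hF2 (s j) p
      omega
    refine ⟨fun p => F (s j) p - F (s i) p, fun p => by dsimp only; have := hMle p; omega, ?_, ?_⟩
    · -- nonzero
      obtain ⟨p, hp⟩ := hF3 (s j)
      have hsum : F (s i) p ≤ ∑ q, F (s i) q :=
        Finset.single_le_sum (fun q _ => hF2 (s i) q) (Finset.mem_univ p)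
      have := hbig i j hij
      intro hzero
      have := congrFun hzero p
      simp only [Pi.zero_apply] at this
      omega
    · -- reachable from 0
      have hr := N.reach_of_parikh (fun t => x j t - x i t)
      convert hr using 1
      funext p
      have h1 := hx i p
      have h2 := hx j p
      have hcast : ∀ t, ((x j t - x i t : ℕ) : ℤ) = (x j t : ℤ) - (x i t : ℤ) := by
        intro t; have := hxle t; omega
      calc F (s j) p - F (s i) p
          = ∑ t, ((x j t : ℤ) - (x i t : ℤ)) * ((N.post t p : ℤ) - (N.pre t p : ℤ)) := by
            rw [h1, h2, Finset.sum_congr rfl (fun t _ => sub_mul ((x j t : ℤ)) _ _),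
              Finset.sum_sub_distrib]
            ring
        _ = ∑ t, ((x j t - x i t : ℕ) : ℤ) * ((N.post t p : ℤ) - (N.pre t p : ℤ)) := by
            exact Finset.sum_congr rfl (fun t _ => by rw [hcast t])
  · rintro ⟨d, hd0, hdne, hdr⟩ ⟨b, hb⟩
    obtain ⟨p₀, hp₀⟩ := Function.ne_iff.mp hdne
    simp only [Pi.zero_apply] at hp₀
    have hp₀' : 1 ≤ d p₀ := by have := hd0 p₀; omega
    have h1 : N.zreach (0 : P → ℤ) (fun p => ((b : ℤ) + 1) * d p) := by
      obtain ⟨x, hxp⟩ := N.parikh hdr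
      have hr := N.reach_of_parikh (fun t => (b + 1) * x t)
      convert hr using 1
      funext p
      have := hxp p
      simp only [Pi.zero_apply, zero_add] at this
      rw [this, Finset.mul_sum]
      refine Finset.sum_congr rfl (fun t _ => ?_)
      push_cast
      ring
    have h2 := N.zreach_add (fun p => (m p : ℤ)) h1
    have h3 : N.zreach (fun p => (m p : ℤ)) (fun p => ((b : ℤ) + 1) * d p + (m p : ℤ)) := by
      simpa using h2
    have h4 := hb _ h3 (fun p => add_nonneg (mul_nonneg (by positivity) (hd0 p))
      (Int.natCast_nonneg _)) p₀
    have h5 : ((b : ℤ) + 1) * 1 ≤ ((b : ℤ) + 1) * d p₀ :=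
      mul_le_mul_of_nonneg_left hp₀' (by positivity)
    have h6 : (0 : ℤ) ≤ (m p₀ : ℤ) := Int.natCast_nonneg _
    omega
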